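/- Let T > 0, α ∈ (0,1), c₀ ≥ 0. There exists a constant C = C(α, c₀, T) > 0 such that the following holds: for every c₁ ≥ 0 and every continuous nonnegative ψ : [0,T] → ℝ satisfying ψ(t) ≤ c₀ ∫₀ᵗ (t−s)^{−α} m_ψ(s) ds + c₁ for all t ∈ [0,T], where m_ψ(s) = sup_{0≤τ≤s} ψ(τ), one has sup_{0≤t≤T} ψ(t) ≤ C · c₁. -/

import Mathlib

open Set MeasureTheory

lemma sg_kernel_ii {α : ℝ} (hα : α < 1) (t a b : ℝ) :
    IntervalIntegrable (fun s => (t - s) ^ (-α)) volume a b := by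
  have h := (intervalIntegral.intervalIntegrable_rpow' (a := t - a) (b := t - b)
    (r := -α) (by linarith)).comp_sub_left t
  simpa using h

lemma sg_kernel_int {α : ℝ} (hα : α ∈ Set.Ioo (0:ℝ) 1) {t a b : ℝ} (hab : a ≤ b) :
    ∫ s in Set.Ioc a b, (t - s) ^ (-α) = ((t-a)^(1-α) - (t-b)^(1-α))/(1-α) := by
  rw [← intervalIntegral.integral_of_le hab]
  rw [intervalIntegral.integral_comp_sub_left (fun x => x ^ (-α)) t]
  rw [integral_rpow (Or.inl (by linarith [hα.2]))]
  ring_nf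

/-- Gronwall-type lemma for the singular kernel `(t−s)^{−α}`: there is a constant
`C = C(α, c₀, T) > 0` such that every continuous nonnegative `ψ` satisfying
`ψ(t) ≤ c₀ ∫₀ᵗ (t−s)^{−α} m_ψ(s) ds + c₁` on `[0,T]`, with
`m_ψ(s) = sup_{0≤τ≤s} ψ(τ)`, obeys `sup_{0≤t≤T} ψ(t) ≤ C·c₁`. -/
theorem singular_gronwall (T α c₀ : ℝ) (hT : 0 < T)
    (hα : α ∈ Set.Ioo (0 : ℝ) 1) (hc₀ : 0 ≤ c₀) :
    ∃ C > (0 : ℝ), ∀ c₁ : ℝ, 0 ≤ c₁ →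
      ∀ ψ : ℝ → ℝ, ContinuousOn ψ (Set.Icc 0 T) →
        (∀ t ∈ Set.Icc (0 : ℝ) T, 0 ≤ ψ t) →
        (∀ t ∈ Set.Icc (0 : ℝ) T,
          ψ t ≤ c₀ * (∫ s in Set.Ioc (0 : ℝ) t, (t - s) ^ (-α) * sSup (ψ '' Set.Icc (0 : ℝ) s)) + c₁) →
        sSup (ψ '' Set.Icc (0 : ℝ) T) ≤ C * c₁ := by
  obtain ⟨hα0, hα1⟩ := hα
  set β : ℝ := 1 - α with hβdef
  have hβ0 : 0 < β := by rw [hβdef]; linarith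
  set δ : ℝ := min T ((β / (2*(c₀+1))) ^ (1/β)) with hδdef
  have hδ0 : 0 < δ := lt_min hT (Real.rpow_pos_of_pos (div_pos hβ0 (by linarith)) _)
  have hδsmall : c₀ * (δ ^ β / β) ≤ 1/2 := by
    have hx0 : (0:ℝ) ≤ β / (2*(c₀+1)) := le_of_lt (div_pos hβ0 (by linarith))
    have h2 : δ ^ β ≤ ((β / (2*(c₀+1))) ^ (1/β)) ^ β :=
      Real.rpow_le_rpow hδ0.le (min_le_right _ _) hβ0.le
    rw [← Real.rpow_mul hx0, one_div_mul_cancel hβ0.ne', Real.rpow_one] at h2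
    have h2' : δ ^ β * (2*(c₀+1)) ≤ β := (le_div_iff₀ (by linarith)).mp h2
    rw [mul_div_assoc', div_le_iff₀ hβ0]
    nlinarith [Real.rpow_nonneg hδ0.le β]
  set B : ℝ := T ^ β / β with hBdef
  have hB0 : 0 ≤ B := div_nonneg (Real.rpow_nonneg hT.le _) hβ0.le
  set D : ℝ := 2*c₀*B + 2 with hDdef
  have hD1 : 1 ≤ D := by
    have := mul_nonneg hc₀ hB0
    rw [hDdef]; linarith
  have hD0 : (0:ℝ) ≤ D := by linarith
  set n : ℕ := ⌈T/δ⌉₊ with hndef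
  have hTn : T ≤ n * δ := by
    have h := Nat.le_ceil (T/δ)
    rw [div_le_iff₀ hδ0] at h
    exact h
  refine ⟨D ^ n, pow_pos (by linarith) n, ?_⟩
  intro c₁ hc₁ ψ hψc hψ0 hineq
  set M : ℝ → ℝ := fun s => sSup (ψ '' (Icc 0 T ∩ Iic s)) with hMdef
  have hbddT : BddAbove (ψ '' Icc 0 T) := (isCompact_Icc.image_of_continuousOn hψc).bddAbove
  have hbdd : ∀ s, BddAbove (ψ '' (Icc 0 T ∩ Iic s)) :=
    fun s => hbddT.mono (image_mono inter_subset_left)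
  have hM0 : ∀ s, 0 ≤ M s := by
    intro s
    apply Real.sSup_nonneg
    rintro x ⟨τ, ⟨hτ, _⟩, rfl⟩
    exact hψ0 τ hτ
  have hMmono : Monotone M := by
    intro s s' h
    rcases eq_empty_or_nonempty (ψ '' (Icc 0 T ∩ Iic s)) with he | hne
    · have : M s = 0 := by simp only [hMdef, he, Real.sSup_empty]
      rw [this]; exact hM0 s'
    · exact csSup_le_csSup (hbdd s') hne
        (image_mono (inter_subset_inter_right _ (Iic_subset_Iic.mpr h)))
  have hMeq : ∀ s ∈ Icc (0:ℝ) T, sSup (ψ '' Icc 0 s) = M s := by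
    intro s hs
    have hset : Icc (0:ℝ) T ∩ Iic s = Icc 0 s := by
      ext x
      simp only [mem_inter_iff, mem_Icc, mem_Iic]
      constructor
      · rintro ⟨⟨h1, _⟩, h3⟩; exact ⟨h1, h3⟩
      · rintro ⟨h1, h3⟩; exact ⟨⟨h1, h3.trans hs.2⟩, h3⟩
    simp only [hMdef, hset]
  have hMle : ∀ s : ℝ, ∀ b : ℝ, 0 ≤ b → (∀ τ ∈ Icc (0:ℝ) T, τ ≤ s → ψ τ ≤ b) → M s ≤ b := by
    intro s b hb h
    apply Real.sSup_le _ hb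
    rintro x ⟨τ, ⟨hτ, hτs⟩, rfl⟩
    exact h τ hτ hτs
  have hMmeas : Measurable M := hMmono.measurable
  have hkerint : ∀ t a b : ℝ, a ≤ b → IntegrableOn (fun s => (t-s)^(-α)) (Ioc a b) :=
    fun t a b hab => (intervalIntegrable_iff_integrableOn_Ioc_of_le hab).mp (sg_kernel_ii hα1 t a b)
  have hint : ∀ t ∈ Icc (0:ℝ) T, IntegrableOn (fun s => (t-s)^(-α) * M s) (Ioc 0 t) := by
    intro t ht
    apply Integrable.mono' ((hkerint t 0 t ht.1).const_mul (M t))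
      (((((measurable_const.sub measurable_id).pow measurable_const).mul
        hMmeas)).aestronglyMeasurable.restrict)
    filter_upwards [ae_restrict_mem measurableSet_Ioc] with s hs
    have hts : 0 ≤ t - s := by linarith [hs.2]
    simp only [id_eq, Pi.mul_apply, Pi.sub_apply]
    rw [Real.norm_eq_abs, abs_of_nonneg (mul_nonneg (Real.rpow_nonneg hts _) (hM0 s))]
    rw [mul_comm (M t)]
    exact mul_le_mul_of_nonneg_left (hMmono hs.2) (Real.rpow_nonneg hts _)
  have hcongr : ∀ t ∈ Icc (0:ℝ) T,
      (∫ s in Ioc (0:ℝ) t, (t-s)^(-α) * sSup (ψ '' Icc 0 s))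
        = ∫ s in Ioc (0:ℝ) t, (t-s)^(-α) * M s := by
    intro t ht
    apply setIntegral_congr_fun measurableSet_Ioc
    intro s hs
    dsimp only
    rw [hMeq s ⟨hs.1.le, hs.2.trans ht.2⟩]
  -- key induction
  have key : ∀ k : ℕ, ∀ t ∈ Icc (0:ℝ) T, t ≤ k * δ → M t ≤ D^k * c₁ := by
    intro k
    induction k with
    | zero =>
      intro t ht ht0
      have htz : t = 0 := le_antisymm (by simpa using ht0) ht.1
      subst htz
      simp only [pow_zero, one_mul]
      apply hMle 0 c₁ hc₁
      intro τ hτ hτ0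
      have : τ = 0 := le_antisymm hτ0 hτ.1
      subst this
      have h := hineq 0 ⟨le_refl 0, hT.le⟩
      simpa using h
    | succ k ih =>
      intro t ht htk
      have hDk0 : (0:ℝ) ≤ D^k := pow_nonneg hD0 k
      have hRpart : 0 ≤ c₀*B*(D^k*c₁) :=
        mul_nonneg (mul_nonneg hc₀ hB0) (mul_nonneg hDk0 hc₁)
      have hRnn : 0 ≤ c₀*B*(D^k*c₁) + 2⁻¹ * M t + c₁ := by
        have h2 : 0 ≤ 2⁻¹ * M t := by linarith [hM0 t]
        linarith
      have hbound : ∀ u ∈ Icc (0:ℝ) T, u ≤ t → ψ u ≤ c₀*B*(D^k*c₁) + 2⁻¹ * M t + c₁ := by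
        intro u hu hut
        rcases eq_or_lt_of_le hu.1 with rfl | hu0
        · have h : ψ 0 ≤ c₁ := by simpa using hineq 0 ⟨le_refl 0, hT.le⟩
          have h2 : 0 ≤ 2⁻¹ * M t := by linarith [hM0 t]
          linarith
        set a : ℝ := max (u - δ) 0 with hadef
        have ha0 : 0 ≤ a := le_max_right _ _
        have hda : u - δ ≤ a := le_max_left _ _
        have hau : a ≤ u := max_le (by linarith) hu0.le
        have haT : a ∈ Icc (0:ℝ) T := ⟨ha0, hau.trans hu.2⟩
        have hak : a ≤ k * δ := by
          apply max_le
          · have h1 : t ≤ k*δ + δ := by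
              have := htk
              push_cast at this
              linarith
            linarith
          · have : (0:ℝ) ≤ (k:ℝ) := Nat.cast_nonneg k
            nlinarith
        have hMa : M a ≤ D^k * c₁ := ih a haT hak
        -- integrability pieces
        have hI : IntegrableOn (fun s => (u-s)^(-α) * M s) (Ioc 0 u) := hint u hu
        have hI1 : IntegrableOn (fun s => (u-s)^(-α) * M s) (Ioc 0 a) :=
          hI.mono_set (Ioc_subset_Ioc le_rfl hau)
        have hI2 : IntegrableOn (fun s => (u-s)^(-α) * M s) (Ioc a u) :=
          hI.mono_set (Ioc_subset_Ioc ha0 le_rfl)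
        have hsplit : (∫ s in Ioc (0:ℝ) u, (u-s)^(-α) * M s)
            = (∫ s in Ioc (0:ℝ) a, (u-s)^(-α) * M s) + ∫ s in Ioc a u, (u-s)^(-α) * M s := by
          rw [← setIntegral_union (Ioc_disjoint_Ioc_of_le le_rfl) measurableSet_Ioc hI1 hI2,
            Ioc_union_Ioc_eq_Ioc ha0 hau]
        -- first piece
        have hP1 : (∫ s in Ioc (0:ℝ) a, (u-s)^(-α) * M s) ≤ M a * B := by
          have step1 : (∫ s in Ioc (0:ℝ) a, (u-s)^(-α) * M s)
              ≤ ∫ s in Ioc (0:ℝ) a, (u-s)^(-α) * M a := by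
            apply setIntegral_mono_on hI1 ((hkerint u 0 a ha0).mul_const (M a)) measurableSet_Ioc
            intro s hs
            have hus : 0 ≤ u - s := by linarith [hs.2, hau]
            exact mul_le_mul_of_nonneg_left (hMmono hs.2) (Real.rpow_nonneg hus _)
          have step2 : (∫ s in Ioc (0:ℝ) a, (u-s)^(-α) * M a)
              = ((u-(0:ℝ))^β - (u-a)^β)/β * M a := by
            rw [integral_mul_const, sg_kernel_int ⟨hα0, hα1⟩ ha0, hβdef]
          have step3 : ((u-(0:ℝ))^β - (u-a)^β)/β ≤ B := by
            have hub : u ^ β ≤ T ^ β := Real.rpow_le_rpow hu0.le hu.2 hβ0.le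
            have hua : 0 ≤ (u-a)^β := Real.rpow_nonneg (by linarith) _
            rw [hBdef, div_le_div_iff_of_pos_right hβ0, sub_zero]
            linarith
          calc (∫ s in Ioc (0:ℝ) a, (u-s)^(-α) * M s)
              ≤ ((u-(0:ℝ))^β - (u-a)^β)/β * M a := by rw [← step2]; exact step1
            _ ≤ B * M a := mul_le_mul_of_nonneg_right step3 (hM0 a)
            _ = M a * B := mul_comm _ _
        -- second piece
        have hP2 : c₀ * (∫ s in Ioc a u, (u-s)^(-α) * M s) ≤ 2⁻¹ * M u := by
          have step1 : (∫ s in Ioc a u, (u-s)^(-α) * M s)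
              ≤ ∫ s in Ioc a u, (u-s)^(-α) * M u := by
            apply setIntegral_mono_on hI2 ((hkerint u a u hau).mul_const (M u)) measurableSet_Ioc
            intro s hs
            have hus : 0 ≤ u - s := by linarith [hs.2]
            exact mul_le_mul_of_nonneg_left (hMmono hs.2) (Real.rpow_nonneg hus _)
          have step2 : (∫ s in Ioc a u, (u-s)^(-α) * M u)
              = ((u-a)^β - ((u:ℝ)-u)^β)/β * M u := by
            rw [integral_mul_const, sg_kernel_int ⟨hα0, hα1⟩ hau, hβdef]
          have hzero : ((u:ℝ)-u)^β = 0 := by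
            rw [sub_self, Real.zero_rpow hβ0.ne']
          have hle : (u-a)^β ≤ δ^β :=
            Real.rpow_le_rpow (by linarith) (by linarith) hβ0.le
          have step3 : ((u-a)^β - ((u:ℝ)-u)^β)/β ≤ δ^β/β := by
            rw [hzero, sub_zero]
            exact (div_le_div_iff_of_pos_right hβ0).mpr hle
          calc c₀ * (∫ s in Ioc a u, (u-s)^(-α) * M s)
              ≤ c₀ * (((u-a)^β - ((u:ℝ)-u)^β)/β * M u) :=
                mul_le_mul_of_nonneg_left (step2 ▸ step1) hc₀
            _ ≤ c₀ * (δ^β/β * M u) :=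
                mul_le_mul_of_nonneg_left (mul_le_mul_of_nonneg_right step3 (hM0 u)) hc₀
            _ = c₀ * (δ^β/β) * M u := by ring
            _ ≤ 2⁻¹ * M u := mul_le_mul_of_nonneg_right (by linarith) (hM0 u)
        -- combine
        have h := hineq u hu
        rw [hcongr u hu, hsplit, mul_add] at h
        have hc01 : c₀ * (∫ s in Ioc (0:ℝ) a, (u-s)^(-α) * M s) ≤ c₀ * (M a * B) :=
          mul_le_mul_of_nonneg_left hP1 hc₀
        have hMaB : c₀ * (M a * B) ≤ c₀ * B * (D^k * c₁) := by
          rw [mul_comm (M a) B, ← mul_assoc]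
          exact mul_le_mul_of_nonneg_left hMa (mul_nonneg hc₀ hB0)
        have hMut : M u ≤ M t := hMmono hut
        linarith [hP2]
      have hMt := hMle t _ hRnn hbound
      have hpk : 1 ≤ D^k := one_le_pow₀ hD1
      have hexp : D^(k+1) * c₁ = 2*c₀*B*(D^k*c₁) + 2*(D^k*c₁) := by
        rw [pow_succ, hDdef]; ring
      have h1 : c₁ ≤ D^k * c₁ := le_mul_of_one_le_left hc₁ hpk
      rw [hexp]
      linarith [hM0 t]
  have hfin := key n T ⟨hT.le, le_refl T⟩ hTn
  rw [hMeq T ⟨hT.le, le_refl T⟩]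
  exact hfin
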